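/- Let P(k) for k ≥ 0 denote the big projective module in the block of BGG category O for sl₂(ℂ) containing the simple L(k). Then the weight spaces of P(k) are one-dimensional for weights in {k, k−2, …, −k} ∪ {−k−2, −k−4, …} appropriately, and the composite operator (lowering then raising by 2, i.e. f-then-e suitably normalized, here Ω L_ω) acting on the weight-j space of P(k) is an isomorphism for j ≠ −k and is zero for j = −k. -/

import Mathlib

/-- Let `M = P(k)` be the big projective module in the block
of category 𝒪 for sl₂(ℂ) containing `L(k)`, `k ≥ 0`, described structurally:
`M` carries commuting-data `X = L_ω` (lowering the `H`-weight by 2), `Y = Ω`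
(raising it by 2) and `H`, forming an sl₂-triple; `M` is the direct sum of its
`H`-weight spaces `W j`, which vanish above `k` and off the coset `k + 2ℤ`, are
one-dimensional for `-k ≤ j ≤ k` and two-dimensional for `j ≤ -k-2` (Verma flag
`M(k), M(-k-2)`), and `M` is generated by a vector of weight `-k-2`.
Then the composite `Ω L_ω = Y ∘ X` acting on the weight-`j` space `W j` is an
isomorphism for `j ≠ -k` and is zero for `j = -k`. -/
theorem stmt12 (k : ℕ) (M : Type*) [AddCommGroup M] [Module ℂ M]
    (X Y H : Module.End ℂ M)
    (hHX : H ∘ₗ X - X ∘ₗ H = -((2 : ℂ) • X))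
    (hHY : H ∘ₗ Y - Y ∘ₗ H = (2 : ℂ) • Y)
    (hYX : Y ∘ₗ X - X ∘ₗ Y = H)
    (W : ℤ → Submodule ℂ M)
    (hW : ∀ j : ℤ, ∀ w ∈ W j, H w = (j : ℂ) • w)
    (hXW : ∀ j : ℤ, ∀ w ∈ W j, X w ∈ W (j - 2))
    (hYW : ∀ j : ℤ, ∀ w ∈ W j, Y w ∈ W (j + 2))
    (hsup : ⨆ j, W j = ⊤)
    (htop : ∀ j : ℤ, (k : ℤ) < j → W j = ⊥)
    (hpar : ∀ j : ℤ, ¬ (2 ∣ ((k : ℤ) - j)) → W j = ⊥)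
    (hdim1 : ∀ j : ℤ, -(k : ℤ) ≤ j → j ≤ (k : ℤ) → 2 ∣ ((k : ℤ) - j) →
      Module.finrank ℂ (W j) = 1)
    (hdim2 : ∀ j : ℤ, j ≤ -(k : ℤ) - 2 → 2 ∣ ((k : ℤ) - j) →
      Module.finrank ℂ (W j) = 2)
    (hcyc : ∃ v ∈ W (-(k : ℤ) - 2), ∀ N : Submodule ℂ M, v ∈ N →
      (∀ u ∈ N, X u ∈ N ∧ Y u ∈ N ∧ H u ∈ N) → N = ⊤) :
    (∀ j : ℤ, 2 ∣ ((k : ℤ) - j) → j ≤ (k : ℤ) → j ≠ -(k : ℤ) →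
      (∀ w ∈ W j, Y (X w) = 0 → w = 0) ∧ (∀ u ∈ W j, ∃ w ∈ W j, Y (X w) = u)) ∧
    (∀ w ∈ W (-(k : ℤ)), Y (X w) = 0) := by
  classical
  obtain ⟨v, hv, hgen⟩ := hcyc
  -- the only bracket relation we need, as a pointwise identity
  have hrel : ∀ w : M, Y (X w) = X (Y w) + H w := by
    intro w
    have h := LinearMap.ext_iff.mp hYX w
    simp only [LinearMap.sub_apply, LinearMap.comp_apply] at h
    rw [← h]; abel
  set vc : ℕ → M := fun c => (Y ^ c) v with hvc
  set u : ℕ → ℕ → M := fun a c => (X ^ a) (vc c) with hu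
  have vc_succ : ∀ c : ℕ, vc (c + 1) = Y (vc c) := by
    intro c
    simp only [hvc, pow_succ', Module.End.mul_apply]
  have u_succ : ∀ a c : ℕ, u (a + 1) c = X (u a c) := by
    intro a c
    simp only [hu, pow_succ', Module.End.mul_apply]
  have u_zero : ∀ c : ℕ, u 0 c = vc c := by
    intro c; simp only [hu, pow_zero, Module.End.one_apply]
  -- weight-space membership of iterates
  have powX_mem : ∀ (j : ℤ) (w : M), w ∈ W j → ∀ a : ℕ, (X ^ a) w ∈ W (j - 2 * a) := by
    intro j w hw a
    induction a with
    | zero => simpa using hw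
    | succ a ih =>
      have h1 : (X ^ (a + 1)) w = X ((X ^ a) w) := by
        rw [pow_succ', Module.End.mul_apply]
      have h2 := hXW _ _ ih
      rw [h1]
      have hidx : (j - 2 * (a : ℤ)) - 2 = j - 2 * ((a : ℕ) + 1 : ℕ) := by push_cast; ring
      rwa [hidx] at h2
  have powY_mem : ∀ (j : ℤ) (w : M), w ∈ W j → ∀ c : ℕ, (Y ^ c) w ∈ W (j + 2 * c) := by
    intro j w hw c
    induction c with
    | zero => simpa using hw
    | succ c ih =>
      have h1 : (Y ^ (c + 1)) w = Y ((Y ^ c) w) := by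
        rw [pow_succ', Module.End.mul_apply]
      have h2 := hYW _ _ ih
      rw [h1]
      have hidx : (j + 2 * (c : ℤ)) + 2 = j + 2 * ((c : ℕ) + 1 : ℕ) := by push_cast; ring
      rwa [hidx] at h2
  have vc_mem : ∀ c : ℕ, vc c ∈ W (-(k : ℤ) - 2 + 2 * c) := by
    intro c
    have := powY_mem _ _ hv c
    have hidx : -(k : ℤ) - 2 + 2 * (c : ℤ) = (-(k : ℤ) - 2) + 2 * c := by ring
    rwa [hidx]
  have u_mem : ∀ a c : ℕ, u a c ∈ W (-(k : ℤ) - 2 + 2 * c - 2 * a) := by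
    intro a c
    exact powX_mem _ _ (vc_mem c) a
  have vc_big : ∀ c : ℕ, k + 2 ≤ c → vc c = 0 := by
    intro c hc
    have h1 := vc_mem c
    have h2 : W (-(k : ℤ) - 2 + 2 * c) = ⊥ := htop _ (by omega)
    rw [h2] at h1
    simpa using h1
  -- commuting Y past powers of X
  have keyY : ∀ a : ℕ, ∀ (j : ℤ) (w : M), w ∈ W j →
      Y ((X ^ (a + 1)) w) = (X ^ (a + 1)) (Y w)
        + (((a : ℂ) + 1) * ((j : ℂ) - (a : ℂ))) • ((X ^ a) w) := by
    intro a
    induction a with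
    | zero =>
      intro j w hw
      simp only [zero_add, pow_one, pow_zero, Module.End.one_apply, Nat.cast_zero]
      rw [hrel w, hW j w hw]
      match_scalars <;> ring
    | succ a ih =>
      intro j w hw
      have hXw := hXW j w hw
      have h1 : (X ^ (a + 1 + 1)) w = (X ^ (a + 1)) (X w) := by
        rw [pow_succ, Module.End.mul_apply]
      have h2 : (X ^ (a + 1)) w = (X ^ a) (X w) := by
        rw [pow_succ, Module.End.mul_apply]
      rw [h1, ih (j - 2) (X w) hXw, hrel w, hW j w hw, map_add, map_smul, ← h2]
      have h3 : (X ^ (a + 1 + 1)) (Y w) = (X ^ (a + 1)) (X (Y w)) := by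
        rw [pow_succ, Module.End.mul_apply]
      rw [← h3]
      match_scalars <;> (push_cast; ring)
  -- commuting X past powers of Y
  have keyX : ∀ c : ℕ, ∀ (j : ℤ) (w : M), w ∈ W j →
      X ((Y ^ (c + 1)) w) = (Y ^ (c + 1)) (X w)
        - (((c : ℂ) + 1) * ((j : ℂ) + (c : ℂ))) • ((Y ^ c) w) := by
    intro c
    induction c with
    | zero =>
      intro j w hw
      simp only [zero_add, pow_one, pow_zero, Module.End.one_apply, Nat.cast_zero]
      have h := hrel w
      rw [hW j w hw] at h
      -- h : Y (X w) = X (Y w) + j • w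
      have : X (Y w) = Y (X w) - (j : ℂ) • w := by rw [h]; abel
      rw [this]
      match_scalars <;> ring
    | succ c ih =>
      intro j w hw
      have hYw := hYW j w hw
      have h1 : (Y ^ (c + 1 + 1)) w = (Y ^ (c + 1)) (Y w) := by
        rw [pow_succ, Module.End.mul_apply]
      have h2 : (Y ^ (c + 1)) w = (Y ^ c) (Y w) := by
        rw [pow_succ, Module.End.mul_apply]
      have h4 : X (Y w) = Y (X w) - (j : ℂ) • w := by
        rw [hrel w, hW j w hw]; abel
      rw [h1, ih (j + 2) (Y w) hYw, h4, map_sub, map_smul, ← h2]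
      have h3 : (Y ^ (c + 1 + 1)) (X w) = (Y ^ (c + 1)) (Y (X w)) := by
        rw [pow_succ, Module.End.mul_apply]
      rw [← h3]
      match_scalars <;> (push_cast; ring)
  -- the key formula for Y ∘ X on the spanning vectors
  have Tu : ∀ a c : ℕ, Y (X (u a c)) = u (a + 1) (c + 1)
      + (((a : ℂ) + 1) * (((-(k : ℤ) - 2 + 2 * (c : ℤ)) : ℤ) : ℂ) - ((a : ℂ) + 1) * (a : ℂ)) • u a c := by
    intro a c
    have h1 : X (u a c) = (X ^ (a + 1)) (vc c) := by
      rw [← u_succ a c]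
    rw [h1, keyY a _ _ (vc_mem c), ← vc_succ c]
    have h2 : (X ^ (a + 1)) (vc (c + 1)) = u (a + 1) (c + 1) := by simp only [hu]
    have h3 : (X ^ a) (vc c) = u a c := by simp only [hu]
    rw [h2, h3]
    match_scalars <;> (push_cast; ring)
  -- the span of all the `u a c` is everything
  have hNtop : Submodule.span ℂ {x : M | ∃ a c : ℕ, u a c = x} = ⊤ := by
    set N := Submodule.span ℂ {x : M | ∃ a c : ℕ, u a c = x} with hN
    have hsub : ∀ a c : ℕ, u a c ∈ N := fun a c =>
      Submodule.subset_span ⟨a, c, rfl⟩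
    have hmapped : ∀ f : Module.End ℂ M, (∀ a c : ℕ, f (u a c) ∈ N) → ∀ x ∈ N, f x ∈ N := by
      intro f hf x hx
      have hle : Submodule.map f N ≤ N := by
        rw [hN, Submodule.map_span, Submodule.span_le]
        rintro y ⟨z, ⟨a, c, rfl⟩, rfl⟩
        exact hf a c
      exact hle (Submodule.mem_map_of_mem hx)
    refine hgen N (by simpa [u_zero 0, hvc, Module.End.one_apply] using hsub 0 0) ?_
    intro x hx
    refine ⟨?_, ?_, ?_⟩
    · refine hmapped X ?_ x hx
      intro a c
      rw [← u_succ a c]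
      exact hsub (a + 1) c
    · refine hmapped Y ?_ x hx
      intro a c
      cases a with
      | zero =>
        rw [u_zero c, ← vc_succ c, ← u_zero (c + 1)]
        exact hsub 0 (c + 1)
      | succ b =>
        have h1 : u (b + 1) c = (X ^ (b + 1)) (vc c) := by simp only [hu]
        rw [h1, keyY b _ _ (vc_mem c), ← vc_succ c]
        have h2 : (X ^ (b + 1)) (vc (c + 1)) = u (b + 1) (c + 1) := by simp only [hu]
        have h3 : (X ^ b) (vc c) = u b c := by simp only [hu]
        rw [h2, h3]
        exact Submodule.add_mem _ (hsub _ _) (Submodule.smul_mem _ _ (hsub _ _))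
    · refine hmapped H ?_ x hx
      intro a c
      rw [hW _ _ (u_mem a c)]
      exact Submodule.smul_mem _ _ (hsub a c)
  -- each weight space is spanned by the `u a c` of the right weight
  have hWP : ∀ j : ℤ, W j ≤ Submodule.span ℂ
      {x : M | ∃ a c : ℕ, -(k : ℤ) - 2 + 2 * c - 2 * a = j ∧ u a c = x} := by
    intro j m hm
    set Pw : ℤ → Submodule ℂ M := fun jj => Submodule.span ℂ
      {x : M | ∃ a c : ℕ, -(k : ℤ) - 2 + 2 * c - 2 * a = jj ∧ u a c = x} with hPw
    have hPE : ∀ w : ℤ, Pw w ≤ Module.End.eigenspace H ((w : ℤ) : ℂ) := by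
      intro w
      rw [hPw, Submodule.span_le]
      rintro x ⟨a, c, hwt, rfl⟩
      rw [SetLike.mem_coe, Module.End.mem_eigenspace_iff, hW _ _ (u_mem a c), hwt]
    have hmE : m ∈ Module.End.eigenspace H ((j : ℤ) : ℂ) :=
      Module.End.mem_eigenspace_iff.mpr (hW j m hm)
    have hmSup : m ∈ ⨆ w : ℤ, Pw w := by
      have hle : Submodule.span ℂ {x : M | ∃ a c : ℕ, u a c = x} ≤ ⨆ w : ℤ, Pw w := by
        rw [Submodule.span_le]
        rintro x ⟨a, c, rfl⟩
        exact Submodule.mem_iSup_of_mem (-(k : ℤ) - 2 + 2 * c - 2 * a)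
          (Submodule.subset_span ⟨a, c, rfl, rfl⟩)
      exact hle (hNtop ▸ Submodule.mem_top)
    obtain ⟨f, hf, hsum⟩ := (Submodule.mem_iSup_iff_exists_finsupp Pw m).mp hmSup
    have hdisj := (Module.End.eigenspaces_iSupIndep H) ((j : ℤ) : ℂ)
    have hrest : m - f j ∈ ⨆ (μ : ℂ) (_ : μ ≠ ((j : ℤ) : ℂ)), Module.End.eigenspace H μ := by
      have hsplit : m - f j = ∑ w ∈ f.support.erase j, f w := by
        by_cases hj : j ∈ f.support
        · have : m = f j + ∑ w ∈ f.support.erase j, f w := by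
            rw [← hsum]; exact (Finset.add_sum_erase _ _ hj).symm
          rw [this]; abel
        · have h0 : f j = 0 := Finsupp.notMem_support_iff.mp hj
          rw [h0, sub_zero, Finset.erase_eq_of_notMem hj, ← hsum]
          rfl
      rw [hsplit]
      refine Submodule.sum_mem _ ?_
      intro w hwmem
      have hne : w ≠ j := Finset.ne_of_mem_erase hwmem
      have hne' : ((w : ℤ) : ℂ) ≠ ((j : ℤ) : ℂ) := by exact_mod_cast hne
      exact Submodule.mem_iSup_of_mem ((w : ℤ) : ℂ)
        (Submodule.mem_iSup_of_mem hne' (hPE w (hf w)))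
    have hmem2 : m - f j ∈ Module.End.eigenspace H ((j : ℤ) : ℂ) :=
      Submodule.sub_mem _ hmE (hPE j (hf j))
    have hzero : m - f j = 0 := by
      have := Submodule.disjoint_def.mp hdisj _ hmem2 hrest
      exact this
    have : m = f j := by
      have := sub_eq_zero.mp hzero; exact this
    rw [this]
    exact hf j
  -- a one-dimensional weight space is spanned by any of its nonzero vectors
  have span1 : ∀ (j : ℤ), Module.finrank ℂ (W j) = 1 → ∀ x, x ∈ W j → x ≠ 0 →
      W j = Submodule.span ℂ {x} := by
    intro j hfr x hx hxne
    have hfd : FiniteDimensional ℂ (W j) := FiniteDimensional.of_finrank_pos (by omega)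
    refine (Submodule.eq_of_le_of_finrank_le
      ((Submodule.span_singleton_le_iff_mem _ _).mpr hx) ?_).symm
    rw [hfr, finrank_span_singleton hxne]
  -- the highest vector is nonzero
  have hvk1 : vc (k + 1) ≠ 0 := by
    intro h0
    have hWk : W (k : ℤ) ≤ Submodule.span ℂ ({0} : Set M) := by
      refine le_trans (hWP (k : ℤ)) (Submodule.span_le.mpr ?_)
      rintro x ⟨a, c, hwt, rfl⟩
      have hx0 : u a c = 0 := by
        by_cases hc : k + 2 ≤ c
        · have := vc_big c hc
          simp only [hu, this, map_zero]
        · have hac : c = k + 1 ∧ a = 0 := by omega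
          obtain ⟨rfl, rfl⟩ := hac
          rw [u_zero, h0]
      rw [hx0]
      exact Submodule.zero_mem _
    have hbot : W (k : ℤ) = ⊥ := by
      rw [Submodule.span_zero_singleton] at hWk
      exact le_bot_iff.mp hWk
    have hfr := hdim1 (k : ℤ) (by omega) le_rfl ⟨0, by ring⟩
    rw [hbot] at hfr
    simp [finrank_bot] at hfr
  -- all the `vc c`, `c ≤ k+1`, are nonzero
  have vc_ne : ∀ c : ℕ, c ≤ k + 1 → vc c ≠ 0 := by
    intro c hc h0
    apply hvk1
    have hall : ∀ m : ℕ, vc (c + m) = 0 := by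
      intro m
      induction m with
      | zero => simpa using h0
      | succ m ih => rw [show c + (m + 1) = (c + m) + 1 by ring, vc_succ, ih, map_zero]
    have := hall (k + 1 - c)
    rwa [Nat.add_sub_cancel' hc] at this
  -- Claim A : the string `X^a (vc (k+1))` does not die before weight `-k`
  have hA : ∀ a : ℕ, a ≤ k → u a (k + 1) ≠ 0 := by
    intro a
    induction a with
    | zero =>
      intro _ h0
      exact vc_ne (k + 1) le_rfl (by rwa [u_zero] at h0)
    | succ a ih =>
      intro hak h0
      have hprev : u a (k + 1) ≠ 0 := ih (by omega)
      have hpW : u a (k + 1) ∈ W ((k : ℤ) - 2 * a) := by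
        have := u_mem a (k + 1)
        have hidx : -(k : ℤ) - 2 + 2 * ((k + 1 : ℕ) : ℤ) - 2 * a = (k : ℤ) - 2 * a := by
          push_cast; ring
        rwa [hidx] at this
      have hXp : X (u a (k + 1)) = 0 := by rw [← u_succ, h0]
      have hex : ∃ c : ℕ, (Y ^ c) (u a (k + 1)) = 0 := by
        refine ⟨k + 1, ?_⟩
        have hmem := powY_mem _ _ hpW (k + 1)
        have hz : W ((k : ℤ) - 2 * a + 2 * ((k + 1 : ℕ) : ℤ)) = ⊥ := htop _ (by push_cast; omega)
        rw [hz] at hmem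
        simpa using hmem
      have hc0spec := Nat.find_spec hex
      have hc0pos : Nat.find hex ≠ 0 := by
        intro hzero
        rw [hzero] at hc0spec
        simp only [pow_zero, Module.End.one_apply] at hc0spec
        exact hprev hc0spec
      obtain ⟨c₁, hc₁⟩ : ∃ c₁, Nat.find hex = c₁ + 1 := ⟨Nat.find hex - 1, by omega⟩
      have hyne : (Y ^ c₁) (u a (k + 1)) ≠ 0 := Nat.find_min hex (by omega)
      have hkey := keyX c₁ _ _ hpW
      rw [hXp, map_zero, ← hc₁, hc0spec, map_zero] at hkey
      have hco : (((c₁ : ℂ) + 1) * ((((k : ℤ) - 2 * a : ℤ) : ℂ) + (c₁ : ℂ))) • (Y ^ c₁) (u a (k + 1)) = 0 := by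
        have h2 := hkey.symm
        rwa [zero_sub, neg_eq_zero] at h2
      have hcoef : (((c₁ : ℂ) + 1) * ((((k : ℤ) - 2 * a : ℤ) : ℂ) + (c₁ : ℂ))) = 0 := by
        rcases smul_eq_zero.mp hco with h | h
        · exact h
        · exact absurd h hyne
      have hc1Z : (c₁ : ℤ) = 2 * a - k := by
        rcases mul_eq_zero.mp hcoef with h | h
        · exact absurd h (Nat.cast_add_one_ne_zero c₁)
        · have : (((k : ℤ) - 2 * a + c₁ : ℤ) : ℂ) = 0 := by push_cast at h ⊢; linear_combination h
          have h2 : ((k : ℤ) - 2 * a + c₁ : ℤ) = 0 := by exact_mod_cast this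
          omega
      have hyW : (Y ^ c₁) (u a (k + 1)) ∈ W (2 * (a : ℤ) - k) := by
        have := powY_mem _ _ hpW c₁
        have hidx : (k : ℤ) - 2 * a + 2 * c₁ = 2 * (a : ℤ) - k := by omega
        rwa [hidx] at this
      have hvaW : vc (a + 1) ∈ W (2 * (a : ℤ) - k) := by
        have := vc_mem (a + 1)
        have hidx : -(k : ℤ) - 2 + 2 * ((a + 1 : ℕ) : ℤ) = 2 * (a : ℤ) - k := by push_cast; ring
        rwa [hidx] at this
      have hfr : Module.finrank ℂ (W (2 * (a : ℤ) - k)) = 1 :=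
        hdim1 _ (by omega) (by omega) ⟨(k : ℤ) - a, by ring⟩
      have hspan := span1 _ hfr _ hyW hyne
      have hmem : vc (a + 1) ∈ Submodule.span ℂ {(Y ^ c₁) (u a (k + 1))} := hspan ▸ hvaW
      obtain ⟨lam, hl⟩ := Submodule.mem_span_singleton.mp hmem
      have hva2 : vc (a + 2) = 0 := by
        rw [show a + 2 = (a + 1) + 1 from rfl, vc_succ, ← hl, map_smul]
        have : Y ((Y ^ c₁) (u a (k + 1))) = (Y ^ (c₁ + 1)) (u a (k + 1)) := by
          rw [pow_succ', Module.End.mul_apply]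
        rw [this, ← hc₁, hc0spec, smul_zero]
      exact vc_ne (a + 2) (by omega) hva2
  -- Y ∘ X preserves weight spaces
  have hTW : ∀ (j : ℤ), ∀ x ∈ W j, Y (X x) ∈ W j := by
    intro j x hx
    have := hYW _ _ (hXW _ _ hx)
    rwa [show j - 2 + 2 = j by ring] at this
  constructor
  · intro j hp2 hjk hjne
    by_cases hge : -(k : ℤ) ≤ j
    · -- the one-dimensional weight spaces
      obtain ⟨d, hd⟩ := hp2
      have hd0 : 0 ≤ d := by omega
      set a : ℕ := d.toNat with ha
      have haZ : (a : ℤ) = d := Int.toNat_of_nonneg hd0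
      have hak : a ≤ k := by omega
      have heW : u a (k + 1) ∈ W j := by
        have := u_mem a (k + 1)
        have hidx : -(k : ℤ) - 2 + 2 * ((k + 1 : ℕ) : ℤ) - 2 * (a : ℤ) = j := by
          push_cast; omega
        rwa [hidx] at this
      have hene := hA a hak
      have hsp := span1 j (hdim1 j hge hjk ⟨d, hd⟩) _ heW hene
      have h2 : u (a + 1) (k + 1 + 1) = 0 := by
        simp only [hu]
        rw [vc_big (k + 1 + 1) (by omega), map_zero]
      have hTe : Y (X (u a (k + 1))) = (((a : ℂ) + 1) * ((k : ℂ) - (a : ℂ))) • u a (k + 1) := by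
        rw [Tu a (k + 1), h2, zero_add]
        congr 1
        push_cast; ring
      have hα : (((a : ℂ) + 1) * ((k : ℂ) - (a : ℂ))) ≠ 0 := by
        refine mul_ne_zero (Nat.cast_add_one_ne_zero a) (sub_ne_zero_of_ne ?_)
        exact_mod_cast (show (k : ℕ) ≠ a by omega)
      constructor
      · intro w hw h0
        rw [hsp, Submodule.mem_span_singleton] at hw
        obtain ⟨lam, rfl⟩ := hw
        rw [map_smul, map_smul, hTe, smul_smul] at h0
        rcases smul_eq_zero.mp h0 with h | h
        · rcases mul_eq_zero.mp h with h' | h'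
          · rw [h', zero_smul]
          · exact absurd h' hα
        · exact absurd h hene
      · intro x hx
        rw [hsp, Submodule.mem_span_singleton] at hx
        obtain ⟨lam, rfl⟩ := hx
        refine ⟨(lam / (((a : ℂ) + 1) * ((k : ℂ) - (a : ℂ)))) • u a (k + 1),
          Submodule.smul_mem _ _ heW, ?_⟩
        rw [map_smul, map_smul, hTe, smul_smul, div_mul_cancel₀ lam hα]
    · -- the two-dimensional weight spaces
      have hj : j ≤ -(k : ℤ) - 2 := by
        obtain ⟨d, hd⟩ := hp2; omega
      have hmain : ∀ m a c : ℕ, k + 2 ≤ c + m → (-(k : ℤ) - 2 + 2 * c - 2 * a = j) →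
          u a c ∈ Submodule.map (Y ∘ₗ X) (W j) := by
        intro m
        induction m with
        | zero =>
          intro a c hc hwt
          have hz : u a c = 0 := by
            simp only [hu]
            rw [vc_big c (by omega), map_zero]
          rw [hz]
          exact Submodule.zero_mem _
        | succ m ih =>
          intro a c hc hwt
          by_cases hcm : k + 2 ≤ c + m
          · exact ih a c hcm hwt
          · have hcle : c ≤ k + 1 := by omega
            have huacW : u a c ∈ W j := by
              have := u_mem a c; rwa [hwt] at this
            have hz : (-(k : ℤ) - 2 + 2 * c - a) ≠ 0 := by omega
            have hTf : Y (X (u a c)) = u (a + 1) (c + 1)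
                + (((-(k : ℤ) - 2 + 2 * (c : ℤ) - (a : ℤ) : ℤ) : ℂ) * ((a : ℂ) + 1)) • u a c := by
              rw [Tu a c]
              congr 1
              push_cast; ring
            have hκ : (((-(k : ℤ) - 2 + 2 * (c : ℤ) - (a : ℤ) : ℤ) : ℂ) * ((a : ℂ) + 1)) ≠ 0 :=
              mul_ne_zero (Int.cast_ne_zero.mpr hz) (Nat.cast_add_one_ne_zero a)
            have hnext : u (a + 1) (c + 1) ∈ Submodule.map (Y ∘ₗ X) (W j) := by
              refine ih (a + 1) (c + 1) (by omega) ?_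
              push_cast at hwt ⊢; omega
            have hYXmem : Y (X (u a c)) ∈ Submodule.map (Y ∘ₗ X) (W j) := by
              have := Submodule.mem_map_of_mem (f := Y ∘ₗ X) huacW
              simpa using this
            have hrw : u a c = (((-(k : ℤ) - 2 + 2 * (c : ℤ) - (a : ℤ) : ℤ) : ℂ) * ((a : ℂ) + 1))⁻¹
                • (Y (X (u a c)) - u (a + 1) (c + 1)) := by
              rw [hTf, add_sub_cancel_left, inv_smul_smul₀ hκ]
            rw [hrw]
            exact Submodule.smul_mem _ _ (Submodule.sub_mem _ hYXmem hnext)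
      have hle : W j ≤ Submodule.map (Y ∘ₗ X) (W j) := by
        refine le_trans (hWP j) (Submodule.span_le.mpr ?_)
        rintro x ⟨a, c, hwt, rfl⟩
        exact hmain (k + 2) a c (by omega) hwt
      have hfd : FiniteDimensional ℂ (W j) := by
        refine FiniteDimensional.of_finrank_pos ?_
        rw [hdim2 j hj hp2]; omega
      set T' : W j →ₗ[ℂ] W j := (Y ∘ₗ X).restrict (fun x hx => hTW j x hx) with hT'
      have hTsurj : Function.Surjective T' := by
        rintro ⟨x, hx⟩
        obtain ⟨w, hw, hwx⟩ := Submodule.mem_map.mp (hle hx)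
        refine ⟨⟨w, hw⟩, Subtype.ext ?_⟩
        simpa [hT', LinearMap.restrict_apply] using hwx
      have hTinj : Function.Injective T' := LinearMap.injective_iff_surjective.mpr hTsurj
      constructor
      · intro w hw h0
        have hz : T' ⟨w, hw⟩ = 0 := by
          refine Subtype.ext ?_
          simpa [hT', LinearMap.restrict_apply] using h0
        have h1 : T' ⟨w, hw⟩ = T' 0 := by rw [hz, map_zero]
        exact congrArg Subtype.val (hTinj h1)
      · intro x hx
        obtain ⟨w, hw, hwx⟩ := Submodule.mem_map.mp (hle hx)
        exact ⟨w, hw, by simpa using hwx⟩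
  · -- the zero statement at weight -k
    intro w hw
    have heW : u k (k + 1) ∈ W (-(k : ℤ)) := by
      have := u_mem k (k + 1)
      have hidx : -(k : ℤ) - 2 + 2 * ((k + 1 : ℕ) : ℤ) - 2 * (k : ℤ) = -(k : ℤ) := by
        push_cast; ring
      rwa [hidx] at this
    have hene := hA k le_rfl
    have hfr : Module.finrank ℂ (W (-(k : ℤ))) = 1 :=
      hdim1 _ le_rfl (by omega) ⟨(k : ℤ), by ring⟩
    have hsp := span1 _ hfr _ heW hene
    have h2 : u (k + 1) (k + 1 + 1) = 0 := by
      simp only [hu]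
      rw [vc_big (k + 1 + 1) (by omega), map_zero]
    have hTe : Y (X (u k (k + 1))) = 0 := by
      have h3 : Y (X (u k (k + 1))) = (0 : ℂ) • u k (k + 1) := by
        rw [Tu k (k + 1), h2, zero_add]
        congr 1
        push_cast; ring
      rw [h3, zero_smul]
    rw [hsp, Submodule.mem_span_singleton] at hw
    obtain ⟨lam, rfl⟩ := hw
    rw [map_smul, map_smul, hTe, smul_zero]
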